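/- Let n ≥ 2 and let ω₁, …, ωₙ be complex numbers in the open unit disk 𝔻. Then the model matrix Mₙ = Mₙ(ω₁, …, ωₙ) is a contraction, i.e. its ℓ²-operator norm satisfies ‖Mₙ‖ ≤ 1. -/

import Mathlib

open scoped ComplexConjugate

/-- The model matrix `Mₙ(ω₁, …, ωₙ)`: diagonal entries `ωⱼ`, entries above the diagonal
`(∏_{k=i+1}^{j−1} (−conj ω_k)) · √(1 − |ωᵢ|²) · √(1 − |ωⱼ|²)`, zeros below the diagonal. -/
noncomputable def modelMatrix (n : ℕ) (ω : Fin n → ℂ) : Matrix (Fin n) (Fin n) ℂ :=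
  Matrix.of fun i j =>
    if i = j then ω i
    else if i < j then
      (∏ k ∈ Finset.Ioo i j, -(conj (ω k))) *
        ((Real.sqrt (1 - ‖ω i‖ ^ 2) *
          Real.sqrt (1 - ‖ω j‖ ^ 2) : ℝ) : ℂ)
    else 0

namespace ModelMatrixAux

open Finset Matrix

/-- Telescoping identity over `ℕ`. -/
lemma teleNat (b : ℕ → ℂ) (m : ℕ) :
    ∑ k ∈ Finset.range m, (1 - b k) * ∏ l ∈ Finset.Ico (k + 1) m, b l
      = 1 - ∏ l ∈ Finset.range m, b l := by
  induction m with
  | zero => simp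
  | succ m ih =>
    have h : ∀ k ∈ Finset.range m,
        (1 - b k) * ∏ l ∈ Finset.Ico (k + 1) (m + 1), b l
          = ((1 - b k) * ∏ l ∈ Finset.Ico (k + 1) m, b l) * b m := fun k hk => by
      rw [Finset.prod_Ico_succ_top (Nat.succ_le_of_lt (Finset.mem_range.1 hk)), mul_assoc]
    rw [Finset.sum_range_succ, Finset.sum_congr rfl h, ← Finset.sum_mul, ih,
      Finset.prod_range_succ, Finset.Ico_self, Finset.prod_empty, mul_one]
    ring

/-- Telescoping identity over `Fin n`. -/
lemma teleFin {n : ℕ} (a : Fin n → ℂ) (i : Fin n) :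
    ∑ k ∈ Finset.Iio i, (1 - a k) * ∏ l ∈ Finset.Ioo k i, a l
      = 1 - ∏ l ∈ Finset.Iio i, a l := by
  classical
  set a' : ℕ → ℂ := fun m => if h : m < n then a ⟨m, h⟩ else 1 with ha'def
  have ha' : ∀ k : Fin n, a' k.val = a k := fun k => by simp [ha'def]
  have hIoo : ∀ k : Fin n, ∏ l ∈ Finset.Ico (k.val + 1) i.val, a' l
      = ∏ l ∈ Finset.Ioo k i, a l := by
    intro k
    rw [Finset.Ico_add_one_left_eq_Ioo, ← Fin.map_valEmbedding_Ioo, Finset.prod_map]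
    exact Finset.prod_congr rfl fun l _ => ha' l
  have hIio : ∏ l ∈ Finset.range i.val, a' l = ∏ l ∈ Finset.Iio i, a l := by
    rw [← Nat.Iio_eq_range, ← Fin.map_valEmbedding_Iio, Finset.prod_map]
    exact Finset.prod_congr rfl fun l _ => ha' l
  have hsum : ∑ k ∈ Finset.range i.val, (1 - a' k) * ∏ l ∈ Finset.Ico (k + 1) i.val, a' l
      = ∑ k ∈ Finset.Iio i, (1 - a' k.val) * ∏ l ∈ Finset.Ico (k.val + 1) i.val, a' l := by
    rw [← Nat.Iio_eq_range, ← Fin.map_valEmbedding_Iio, Finset.sum_map]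
    rfl
  calc ∑ k ∈ Finset.Iio i, (1 - a k) * ∏ l ∈ Finset.Ioo k i, a l
      = ∑ k ∈ Finset.Iio i, (1 - a' k.val) * ∏ l ∈ Finset.Ico (k.val + 1) i.val, a' l := by
        refine Finset.sum_congr rfl fun k _ => ?_
        rw [ha', hIoo]
    _ = ∑ k ∈ Finset.range i.val, (1 - a' k) * ∏ l ∈ Finset.Ico (k + 1) i.val, a' l :=
        hsum.symm
    _ = 1 - ∏ l ∈ Finset.range i.val, a' l := teleNat a' i.val
    _ = 1 - ∏ l ∈ Finset.Iio i, a l := by rw [hIio]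

lemma Ioo_union_Ico_eq_Ioo' {α : Type*} [LinearOrder α] [LocallyFiniteOrder α] [DecidableEq α]
    {a b c : α} (h₁ : a < b) (h₂ : b ≤ c) :
    Finset.Ioo a b ∪ Finset.Ico b c = Finset.Ioo a c := by
  rw [← Finset.coe_inj, Finset.coe_union, Finset.coe_Ioo, Finset.coe_Ico, Finset.coe_Ioo,
    Set.Ioo_union_Ico_eq_Ioo h₁ h₂]

lemma Iio_union_Ico_eq_Iio' {α : Type*} [LinearOrder α] [LocallyFiniteOrderBot α]
    [LocallyFiniteOrder α] [DecidableEq α] {a b : α} (h : a ≤ b) :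
    Finset.Iio a ∪ Finset.Ico a b = Finset.Iio b := by
  rw [← Finset.coe_inj, Finset.coe_union, Finset.coe_Iio, Finset.coe_Ico, Finset.coe_Iio,
    Set.Iio_union_Ico_eq_Iio h]

lemma disj_Ioo_Ico {α : Type*} [LinearOrder α] [LocallyFiniteOrder α] {a b c : α} :
    Disjoint (Finset.Ioo a b) (Finset.Ico b c) := by
  refine Finset.disjoint_left.2 fun x hx hx' => ?_
  exact absurd (Finset.mem_Ico.1 hx').1 (not_le.2 (Finset.mem_Ioo.1 hx).2)

lemma disj_Iio_Ico {α : Type*} [LinearOrder α] [LocallyFiniteOrderBot α]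
    [LocallyFiniteOrder α] {a b : α} :
    Disjoint (Finset.Iio a) (Finset.Ico a b) := by
  refine Finset.disjoint_left.2 fun x hx hx' => ?_
  exact absurd (Finset.mem_Ico.1 hx').1 (not_le.2 (Finset.mem_Iio.1 hx))

variable {n : ℕ}

/-- `|ω l|²` as a complex number. -/
noncomputable def mA (ω : Fin n → ℂ) (l : Fin n) : ℂ := ((‖(ω l)‖ ^ 2 : ℝ) : ℂ)

/-- `√(1 − |ω i|²)` as a complex number. -/
noncomputable def mD (ω : Fin n → ℂ) (i : Fin n) : ℂ :=
  ((Real.sqrt (1 - ‖(ω i)‖ ^ 2) : ℝ) : ℂ)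

/-- The defect vector. -/
noncomputable def mV (ω : Fin n → ℂ) (i : Fin n) : ℂ :=
  mD ω i * ∏ l ∈ Finset.Iio i, (-ω l)

lemma conj_mD (ω : Fin n → ℂ) (i : Fin n) : conj (mD ω i) = mD ω i :=
  Complex.conj_ofReal _

lemma mD_mul_self {ω : Fin n → ℂ} (hω : ∀ i, ‖(ω i)‖ < 1) (i : Fin n) :
    mD ω i * mD ω i = 1 - mA ω i := by
  have h : (0 : ℝ) ≤ 1 - ‖(ω i)‖ ^ 2 := by
    have := hω i
    nlinarith [norm_nonneg (ω i)]
  rw [mD, mA, ← Complex.ofReal_mul, Real.mul_self_sqrt h, Complex.ofReal_sub, Complex.ofReal_one]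

lemma neg_mul_neg_conj (ω : Fin n → ℂ) (l : Fin n) :
    (-ω l) * (-(conj (ω l))) = mA ω l := by
  rw [neg_mul_neg, Complex.mul_conj, mA, Complex.sq_norm]

lemma prod_prod (ω : Fin n → ℂ) (s : Finset (Fin n)) :
    (∏ l ∈ s, (-ω l)) * (∏ l ∈ s, -(conj (ω l))) = ∏ l ∈ s, mA ω l := by
  rw [← Finset.prod_mul_distrib]
  exact Finset.prod_congr rfl fun l _ => neg_mul_neg_conj ω l

lemma conj_prod_neg (ω : Fin n → ℂ) (s : Finset (Fin n)) :
    conj (∏ l ∈ s, (-ω l)) = ∏ l ∈ s, -(conj (ω l)) := by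
  rw [map_prod]
  exact Finset.prod_congr rfl fun l _ => by simp

lemma conj_prod_neg' (ω : Fin n → ℂ) (s : Finset (Fin n)) :
    conj (∏ l ∈ s, -(conj (ω l))) = ∏ l ∈ s, (-ω l) := by
  rw [map_prod]
  exact Finset.prod_congr rfl fun l _ => by simp

lemma modelMatrix_apply_of_lt {ω : Fin n → ℂ} {k i : Fin n} (h : k < i) :
    modelMatrix n ω k i = (∏ l ∈ Finset.Ioo k i, -(conj (ω l))) * (mD ω k * mD ω i) := by
  rw [modelMatrix]
  simp only [Matrix.of_apply, if_neg h.ne, if_pos h]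
  rw [Complex.ofReal_mul]
  rfl

lemma modelMatrix_apply_diag (ω : Fin n → ℂ) (i : Fin n) :
    modelMatrix n ω i i = ω i := by
  simp [modelMatrix]

lemma modelMatrix_apply_of_gt {ω : Fin n → ℂ} {k i : Fin n} (h : i < k) :
    modelMatrix n ω k i = 0 := by
  rw [modelMatrix]
  simp only [Matrix.of_apply, if_neg h.ne', if_neg (not_lt.2 h.le)]

/-- The key entrywise identity for `i ≤ j`. -/
lemma key {ω : Fin n → ℂ} (hω : ∀ i, ‖(ω i)‖ < 1) {i j : Fin n} (hij : i ≤ j) :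
    ∑ k, conj (modelMatrix n ω k i) * modelMatrix n ω k j
      = (if i = j then 1 else 0) - mV ω i * conj (mV ω j) := by
  have hzero : ∀ k ∈ Finset.univ, k ∉ Finset.Iic i →
      conj (modelMatrix n ω k i) * modelMatrix n ω k j = 0 := by
    intro k _ hk
    rw [modelMatrix_apply_of_gt (lt_of_not_ge fun h => hk (Finset.mem_Iic.mpr h)), map_zero, zero_mul]
  rw [← Finset.sum_subset (Finset.subset_univ (Finset.Iic i)) hzero,
    Finset.Iic_eq_cons_Iio, Finset.sum_cons, modelMatrix_apply_diag]
  rcases eq_or_lt_of_le hij with rfl | hlt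
  · -- diagonal case
    have hterm : ∀ k ∈ Finset.Iio i,
        conj (modelMatrix n ω k i) * modelMatrix n ω k i
          = (1 - mA ω i) * ((1 - mA ω k) * ∏ l ∈ Finset.Ioo k i, mA ω l) := by
      intro k hk
      have hk' : k < i := Finset.mem_Iio.1 hk
      rw [modelMatrix_apply_of_lt hk', _root_.map_mul, conj_prod_neg', _root_.map_mul, conj_mD, conj_mD]
      rw [show (∏ l ∈ Finset.Ioo k i, (-ω l)) * (mD ω k * mD ω i) *
            ((∏ l ∈ Finset.Ioo k i, -(conj (ω l))) * (mD ω k * mD ω i))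
          = ((∏ l ∈ Finset.Ioo k i, (-ω l)) * (∏ l ∈ Finset.Ioo k i, -(conj (ω l)))) *
            (mD ω k * mD ω k) * (mD ω i * mD ω i) from by ring,
        prod_prod, mD_mul_self hω, mD_mul_self hω]
      ring
    rw [Finset.sum_congr rfl hterm, ← Finset.mul_sum, teleFin (mA ω) i]
    have hV : mV ω i * conj (mV ω i) = (1 - mA ω i) * ∏ l ∈ Finset.Iio i, mA ω l := by
      rw [mV, _root_.map_mul, conj_mD, conj_prod_neg]
      rw [show mD ω i * (∏ l ∈ Finset.Iio i, (-ω l)) *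
            (mD ω i * ∏ l ∈ Finset.Iio i, -(conj (ω l)))
          = (mD ω i * mD ω i) *
            ((∏ l ∈ Finset.Iio i, (-ω l)) * ∏ l ∈ Finset.Iio i, -(conj (ω l))) from by ring,
        prod_prod, mD_mul_self hω]
    have hc : conj (ω i) * ω i = mA ω i := by
      rw [mul_comm, Complex.mul_conj, mA, Complex.sq_norm]
    rw [modelMatrix_apply_diag, if_pos rfl, hV, hc]
    ring
  · -- off-diagonal case i < j
    have hsplitIoo : ∀ k : Fin n, k < i →
        (∏ l ∈ Finset.Ioo k j, -(conj (ω l)))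
          = (∏ l ∈ Finset.Ioo k i, -(conj (ω l))) *
            (-(conj (ω i)) * ∏ l ∈ Finset.Ioo i j, -(conj (ω l))) := by
      intro k hk
      rw [← Ioo_union_Ico_eq_Ioo' hk hlt.le, Finset.prod_union disj_Ioo_Ico,
        Finset.Ico_eq_cons_Ioo hlt, Finset.prod_cons]
    set Q : ℂ := ∏ l ∈ Finset.Ioo i j, -(conj (ω l)) with hQ
    set C : ℂ := Q * (mD ω i * mD ω j) with hC
    have hMij : modelMatrix n ω i j = C := modelMatrix_apply_of_lt hlt
    have hterm : ∀ k ∈ Finset.Iio i,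
        conj (modelMatrix n ω k i) * modelMatrix n ω k j
          = ((1 - mA ω k) * ∏ l ∈ Finset.Ioo k i, mA ω l) * (-(conj (ω i)) * C) := by
      intro k hk
      have hk' : k < i := Finset.mem_Iio.1 hk
      rw [modelMatrix_apply_of_lt hk', modelMatrix_apply_of_lt (hk'.trans hlt),
        hsplitIoo k hk', _root_.map_mul, conj_prod_neg', _root_.map_mul, conj_mD, conj_mD]
      rw [show (∏ l ∈ Finset.Ioo k i, (-ω l)) * (mD ω k * mD ω i) *
            ((∏ l ∈ Finset.Ioo k i, -(conj (ω l))) *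
              (-(conj (ω i)) * Q) * (mD ω k * mD ω j))
          = ((∏ l ∈ Finset.Ioo k i, (-ω l)) * (∏ l ∈ Finset.Ioo k i, -(conj (ω l)))) *
            (mD ω k * mD ω k) * (-(conj (ω i)) * (Q * (mD ω i * mD ω j))) from by ring,
        prod_prod, mD_mul_self hω, ← hC]
      ring
    rw [Finset.sum_congr rfl hterm, ← Finset.sum_mul, teleFin (mA ω) i, hMij]
    have hV : mV ω i * conj (mV ω j)
        = (∏ l ∈ Finset.Iio i, mA ω l) * (-(conj (ω i)) * C) := by
      have hsplitIio : (∏ l ∈ Finset.Iio j, -(conj (ω l)))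
          = (∏ l ∈ Finset.Iio i, -(conj (ω l))) * (-(conj (ω i)) * Q) := by
        rw [← Iio_union_Ico_eq_Iio' hlt.le, Finset.prod_union disj_Iio_Ico,
          Finset.Ico_eq_cons_Ioo hlt, Finset.prod_cons]
      rw [mV, mV, _root_.map_mul, conj_mD, conj_prod_neg, hsplitIio]
      rw [show mD ω i * (∏ l ∈ Finset.Iio i, (-ω l)) *
            (mD ω j * ((∏ l ∈ Finset.Iio i, -(conj (ω l))) * (-(conj (ω i)) * Q)))
          = ((∏ l ∈ Finset.Iio i, (-ω l)) * (∏ l ∈ Finset.Iio i, -(conj (ω l)))) *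
            (-(conj (ω i)) * (Q * (mD ω i * mD ω j))) from by ring,
        prod_prod, ← hC]
    rw [if_neg hlt.ne, hV]
    ring

/-- The rank-one defect identity. -/
lemma keyMatrix {ω : Fin n → ℂ} (hω : ∀ i, ‖(ω i)‖ < 1) :
    (modelMatrix n ω)ᴴ * modelMatrix n ω
      = 1 - Matrix.vecMulVec (mV ω) (star (mV ω)) := by
  ext i j
  rw [Matrix.mul_apply]
  simp only [Matrix.conjTranspose_apply, Matrix.sub_apply, Matrix.one_apply,
    Matrix.vecMulVec_apply, Pi.star_apply]
  have hstar : ∀ z : ℂ, star z = conj z := fun z => rfl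
  simp only [hstar]
  rcases le_or_gt i j with h | h
  · exact key hω h
  · have h0 := key hω h.le
    have := congrArg conj h0
    rw [_root_.map_sum, _root_.map_sub] at this
    have hL : ∑ k, conj (conj (modelMatrix n ω k j) * modelMatrix n ω k i)
        = ∑ k, conj (modelMatrix n ω k i) * modelMatrix n ω k j := by
      refine Finset.sum_congr rfl fun k _ => ?_
      rw [_root_.map_mul, Complex.conj_conj]
      ring
    rw [hL] at this
    rw [this]
    have h1 : conj (if j = i then (1 : ℂ) else 0) = if i = j then (1 : ℂ) else 0 := by
      simp [eq_comm, apply_ite conj]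
    rw [h1, _root_.map_mul, Complex.conj_conj]
    ring

end ModelMatrixAux

open ModelMatrixAux Matrix

theorem modelMatrix_contraction {n : ℕ} (hn : 2 ≤ n) (ω : Fin n → ℂ)
    (hω : ∀ i, ‖(ω i)‖ < 1) :
    ‖Matrix.toEuclideanCLM (𝕜 := ℂ) (modelMatrix n ω)‖ ≤ 1 := by
  classical
  set M := modelMatrix n ω with hM
  set T := Matrix.toEuclideanCLM (𝕜 := ℂ) M with hT
  refine ContinuousLinearMap.opNorm_le_bound _ zero_le_one fun x => ?_
  rw [one_mul]
  set x' : Fin n → ℂ := WithLp.equiv 2 _ x with hx'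
  set v := mV ω with hv
  set S : ℂ := ∑ j, conj (v j) * x' j with hS
  have hTx : WithLp.equiv 2 _ (T x) = M *ᵥ x' := by
    rw [hT]; exact Matrix.ofLp_toEuclideanCLM _ _
  have hdot : star (M *ᵥ x') ⬝ᵥ (M *ᵥ x') = star x' ⬝ᵥ x' - conj S * S := by
    rw [Matrix.star_mulVec, Matrix.dotProduct_mulVec, Matrix.vecMul_vecMul, hM,
      keyMatrix hω, Matrix.vecMul_sub, Matrix.vecMul_one, sub_dotProduct]
    congr 1
    have h1 : ∀ j, (star x' ᵥ* Matrix.vecMulVec v (star v)) j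
        = (∑ i, conj (x' i) * v i) * conj (v j) := by
      intro j
      simp only [Matrix.vecMul, dotProduct, Matrix.vecMulVec_apply, Pi.star_apply]
      rw [Finset.sum_mul]
      refine Finset.sum_congr rfl fun i _ => ?_
      have : ∀ z : ℂ, star z = conj z := fun z => rfl
      rw [this, this]
      ring
    have h2 : conj S = ∑ i, conj (x' i) * v i := by
      rw [hS, _root_.map_sum]
      refine Finset.sum_congr rfl fun i _ => ?_
      rw [_root_.map_mul, Complex.conj_conj]
      ring
    calc (star x' ᵥ* Matrix.vecMulVec v (star v)) ⬝ᵥ x'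
        = ∑ j, ((∑ i, conj (x' i) * v i) * conj (v j)) * x' j := by
          rw [dotProduct]
          exact Finset.sum_congr rfl fun j _ => by rw [h1]
      _ = (∑ i, conj (x' i) * v i) * ∑ j, conj (v j) * x' j := by
          rw [Finset.mul_sum]
          exact Finset.sum_congr rfl fun j _ => by ring
      _ = conj S * S := by rw [h2, hS]
  have hsq : ‖T x‖ ^ 2 ≤ ‖x‖ ^ 2 := by
    rw [← inner_self_eq_norm_sq (𝕜 := ℂ) (T x), ← inner_self_eq_norm_sq (𝕜 := ℂ) x,
      EuclideanSpace.inner_eq_star_dotProduct, EuclideanSpace.inner_eq_star_dotProduct]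
    change RCLike.re (WithLp.equiv 2 _ (T x) ⬝ᵥ star (WithLp.equiv 2 _ (T x))) ≤ RCLike.re (x' ⬝ᵥ star x')
    rw [dotProduct_comm, dotProduct_comm x', hTx, hdot]
    simp only [RCLike.re_to_complex, Complex.sub_re]
    have h1 : ((starRingEnd ℂ) S * S).re = Complex.normSq S := by
      rw [mul_comm, Complex.mul_conj]
      simp
    rw [h1]
    have := Complex.normSq_nonneg S
    linarith
  calc ‖T x‖ = Real.sqrt (‖T x‖ ^ 2) := by rw [Real.sqrt_sq (norm_nonneg _)]
    _ ≤ Real.sqrt (‖x‖ ^ 2) := Real.sqrt_le_sqrt hsq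
    _ = ‖x‖ := Real.sqrt_sq (norm_nonneg _)
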